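/- Let X be a compact metric space, Γ : C(X) → ℝ a pressure function, and φ ∈ C(X). Suppose Γ is Fréchet differentiable at φ with derivative μ_φ ∈ 𝒫(X). If (μ_n) is a sequence in 𝒫(X) such that 𝔥(μ_n) + ∫ φ dμ_n → Γ(φ) as n → ∞, then ‖μ_n − μ_φ‖ → 0 in the total variation norm. -/

import Mathlib

open MeasureTheory Filter Topology

/-- A pressure function on `C(X,ℝ)`: monotone, translation invariant and convex. -/
def IsPressureFunction {X : Type*} [TopologicalSpace X] [CompactSpace X]
    (Γ : C(X, ℝ) → ℝ) : Prop :=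
  (∀ φ ψ : C(X, ℝ), (∀ x, φ x ≤ ψ x) → Γ φ ≤ Γ ψ) ∧
  (∀ (φ : C(X, ℝ)) (c : ℝ), Γ (φ + ContinuousMap.const X c) = Γ φ + c) ∧
  ConvexOn ℝ Set.univ Γ

/-- The entropy-like map `𝔥(μ) = inf { ∫ φ dμ : φ ∈ C(X), Γ(−φ) ≤ 0 }`, valued in `EReal`. -/
noncomputable def entropyLike {X : Type*} [TopologicalSpace X] [CompactSpace X]
    [MeasurableSpace X] (Γ : C(X, ℝ) → ℝ) (μ : ProbabilityMeasure X) : EReal :=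
  sInf { r : EReal | ∃ φ : C(X, ℝ), Γ (-φ) ≤ 0 ∧
    r = ((∫ x, φ x ∂(μ : Measure X) : ℝ) : EReal) }

/-- Total variation distance between two Borel probability measures, expressed via
integrals of continuous functions of sup norm at most one. -/
noncomputable def tvDist {X : Type*} [TopologicalSpace X] [CompactSpace X]
    [MeasurableSpace X] (μ ν : ProbabilityMeasure X) : ℝ :=
  sSup { r : ℝ | ∃ ψ : C(X, ℝ), ‖ψ‖ ≤ 1 ∧
    r = |∫ x, ψ x ∂(μ : Measure X) - ∫ x, ψ x ∂(ν : Measure X)| }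

/-- Continuous functions are integrable against probability measures on a compact space. -/
lemma cmInt {X : Type*} [MetricSpace X] [CompactSpace X] [MeasurableSpace X] [BorelSpace X]
    (g : C(X, ℝ)) (ν : ProbabilityMeasure X) :
    Integrable (fun x => g x) (ν : Measure X) :=
  g.continuous.integrable_of_hasCompactSupport (HasCompactSupport.of_compactSpace _)

/-- Key variational inequality: `𝔥(μ) + ∫ ξ dμ ≤ Γ ξ`. -/
lemma entropy_add_integral_le {X : Type*} [MetricSpace X] [CompactSpace X]
    [MeasurableSpace X] [BorelSpace X]
    (Γ : C(X, ℝ) → ℝ) (hΓ : IsPressureFunction Γ) (μ : ProbabilityMeasure X)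
    (ξ : C(X, ℝ)) :
    entropyLike Γ μ + ((∫ x, ξ x ∂(μ : Measure X) : ℝ) : EReal) ≤ ((Γ ξ : ℝ) : EReal) := by
  set φ' : C(X, ℝ) := -ξ + ContinuousMap.const X (Γ ξ) with hφ'
  have hneg : -φ' = ξ + ContinuousMap.const X (-(Γ ξ)) := by
    ext x; simp [hφ']; ring
  have hΓ0 : Γ (-φ') ≤ 0 := by
    rw [hneg, hΓ.2.1]; linarith
  have hφ'int : (∫ x, φ' x ∂(μ : Measure X)) = Γ ξ - ∫ x, ξ x ∂(μ : Measure X) := by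
    have : (fun x => φ' x) = fun x => (-ξ) x + Γ ξ := by
      ext x; simp [hφ']
    rw [this, integral_add (cmInt (-ξ) μ) (integrable_const _), integral_const]
    have : (fun x => (-ξ) x) = fun x => -(ξ x) := by ext x; simp
    rw [this, integral_neg]
    simp
    ring
  have hle : entropyLike Γ μ ≤ ((Γ ξ - ∫ x, ξ x ∂(μ : Measure X) : ℝ) : EReal) := by
    apply sInf_le
    exact ⟨φ', hΓ0, by rw [hφ'int]⟩
  calc entropyLike Γ μ + ((∫ x, ξ x ∂(μ : Measure X) : ℝ) : EReal)
      ≤ ((Γ ξ - ∫ x, ξ x ∂(μ : Measure X) : ℝ) : EReal)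
          + ((∫ x, ξ x ∂(μ : Measure X) : ℝ) : EReal) := add_le_add_left hle _
    _ = ((Γ ξ : ℝ) : EReal) := by
          rw [← EReal.coe_add]; norm_num

theorem maximizing_sequences_converge {X : Type*} [MetricSpace X] [CompactSpace X]
    [MeasurableSpace X] [BorelSpace X]
    (Γ : C(X, ℝ) → ℝ) (hΓ : IsPressureFunction Γ) (φ : C(X, ℝ))
    (μφ : ProbabilityMeasure X)
    (hF : Tendsto (fun ψ : C(X, ℝ) =>
        |Γ (φ + ψ) - Γ φ - ∫ x, ψ x ∂(μφ : Measure X)| / ‖ψ‖)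
      (𝓝[≠] (0 : C(X, ℝ))) (𝓝 0))
    (huniq : ∀ ν : ProbabilityMeasure X,
      Tendsto (fun ψ : C(X, ℝ) =>
          |Γ (φ + ψ) - Γ φ - ∫ x, ψ x ∂(ν : Measure X)| / ‖ψ‖)
        (𝓝[≠] (0 : C(X, ℝ))) (𝓝 0) → ν = μφ)
    (μs : ℕ → ProbabilityMeasure X)
    (hμs : Tendsto (fun n : ℕ =>
        entropyLike Γ (μs n) + ((∫ x, φ x ∂(μs n : Measure X) : ℝ) : EReal))
      atTop (𝓝 ((Γ φ : ℝ) : EReal))) :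
    Tendsto (fun n : ℕ => tvDist (μs n) μφ) atTop (𝓝 0) := by
  set S : ℕ → EReal := fun n =>
    entropyLike Γ (μs n) + ((∫ x, φ x ∂(μs n : Measure X) : ℝ) : EReal) with hSdef
  have hS : ∀ n, S n ≤ ((Γ φ : ℝ) : EReal) := fun n =>
    entropy_add_integral_le Γ hΓ (μs n) φ
  have hfin : ∀ᶠ n in atTop, ((Γ φ - 1 : ℝ) : EReal) < S n :=
    hμs.eventually_const_lt (by exact_mod_cast sub_one_lt (Γ φ))
  have hs_tendsto : Tendsto (fun n => (S n).toReal) atTop (𝓝 (Γ φ)) := by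
    have h := (EReal.tendsto_toReal (a := ((Γ φ : ℝ) : EReal))
      (by simp) (by simp)).comp hμs
    exact h
  rw [Metric.tendsto_nhds]
  intro ε hε
  have hε2 : (0 : ℝ) < ε / 2 := by linarith
  -- extract the radius from Fréchet differentiability
  obtain ⟨r, hr0, hr⟩ := Metric.mem_nhdsWithin_iff.1 (hF.eventually_lt_const hε2)
  set t : ℝ := r / 2 with htdef
  have ht : 0 < t := by positivity
  have htr : t < r := by
    rw [htdef]; linarith
  have hderiv : ∀ ψ : C(X, ℝ), ‖ψ‖ ≤ 1 →
      |Γ (φ + t • ψ) - Γ φ - ∫ x, (t • ψ) x ∂(μφ : Measure X)| ≤ ε / 2 * t := by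
    intro ψ hψ
    by_cases h0 : t • ψ = (0 : C(X, ℝ))
    · rw [h0]
      simp
      positivity
    · have hnorm : ‖t • ψ‖ < r := by
        rw [show ‖t • ψ‖ = ‖t‖ * ‖ψ‖ from norm_smul t ψ]
        calc ‖t‖ * ‖ψ‖ ≤ t * 1 := by
              apply mul_le_mul _ hψ (norm_nonneg _) ht.le
              rw [Real.norm_eq_abs, abs_of_pos ht]
          _ < r := by linarith
      have hmem : t • ψ ∈ Metric.ball (0 : C(X, ℝ)) r ∩ {x | x ≠ 0} := by
        constructor
        · rw [Metric.mem_ball, dist_zero_right]; exact hnorm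
        · exact h0
      have hq := hr hmem
      simp only [Set.mem_setOf_eq] at hq
      have hpos : (0 : ℝ) < ‖t • ψ‖ := norm_pos_iff.2 h0
      rw [div_lt_iff₀ hpos] at hq
      calc |Γ (φ + t • ψ) - Γ φ - ∫ x, (t • ψ) x ∂(μφ : Measure X)|
          ≤ ε / 2 * ‖t • ψ‖ := hq.le
        _ ≤ ε / 2 * t := by
            apply mul_le_mul_of_nonneg_left _ hε2.le
            rw [show ‖t • ψ‖ = ‖t‖ * ‖ψ‖ from norm_smul t ψ, Real.norm_eq_abs, abs_of_pos ht]
            nlinarith [norm_nonneg ψ]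
  have h1 : ∀ᶠ n in atTop, Γ φ - (S n).toReal < ε / 2 * t := by
    have : Tendsto (fun n => Γ φ - (S n).toReal) atTop (𝓝 0) := by
      have := tendsto_const_nhds (x := Γ φ) (f := atTop (α := ℕ)) |>.sub hs_tendsto
      simpa using this
    exact this.eventually_lt_const (by positivity)
  rw [eventually_atTop] at h1 hfin ⊢
  obtain ⟨N1, hN1⟩ := h1
  obtain ⟨N2, hN2⟩ := hfin
  refine ⟨max N1 N2, fun n hn => ?_⟩
  have hn1 := hN1 n (le_trans (le_max_left _ _) hn)
  have hn2 := hN2 n (le_trans (le_max_right _ _) hn)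
  have hne_bot : S n ≠ ⊥ := fun h => by simp [h] at hn2
  have hne_top : S n ≠ ⊤ := fun h => by
    have := hS n; rw [h] at this
    exact (EReal.coe_lt_top (Γ φ)).not_ge this
  set a : ℝ := (S n).toReal with hadef
  have hSn : S n = (a : EReal) := (EReal.coe_toReal hne_top hne_bot).symm
  have haΓ : a ≤ Γ φ := by
    have := hS n; rw [hSn] at this; exact_mod_cast this
  have hineq : ∀ ψ : C(X, ℝ), ‖ψ‖ ≤ 1 →
      (∫ x, ψ x ∂(μs n : Measure X)) - ∫ x, ψ x ∂(μφ : Measure X)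
        ≤ (Γ φ - a) / t + ε / 2 := by
    intro ψ hψ
    have hk := entropy_add_integral_le Γ hΓ (μs n) (φ + t • ψ)
    have hsplit : (∫ x, (φ + t • ψ) x ∂(μs n : Measure X))
        = (∫ x, φ x ∂(μs n : Measure X)) + t * ∫ x, ψ x ∂(μs n : Measure X) := by
      have : (fun x => (φ + t • ψ) x) = fun x => φ x + t * ψ x := by
        ext x; simp
      rw [this, integral_add (cmInt φ _) ((cmInt ψ _).const_mul t), integral_const_mul]
    rw [hsplit] at hk
    have hk2 : ((a + t * ∫ x, ψ x ∂(μs n : Measure X) : ℝ) : EReal)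
        ≤ ((Γ (φ + t • ψ) : ℝ) : EReal) := by
      calc ((a + t * ∫ x, ψ x ∂(μs n : Measure X) : ℝ) : EReal)
          = S n + ((t * ∫ x, ψ x ∂(μs n : Measure X) : ℝ) : EReal) := by
            rw [hSn, ← EReal.coe_add]
        _ = entropyLike Γ (μs n)
              + (((∫ x, φ x ∂(μs n : Measure X)) + t * ∫ x, ψ x ∂(μs n : Measure X) : ℝ) : EReal) := by
            rw [hSdef]
            rw [EReal.coe_add, add_assoc]
        _ ≤ _ := hk
    have hk3 : a + t * ∫ x, ψ x ∂(μs n : Measure X) ≤ Γ (φ + t • ψ) :=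
      EReal.coe_le_coe_iff.1 hk2
    have hd := hderiv ψ hψ
    have hsplitφ : (∫ x, (t • ψ) x ∂(μφ : Measure X)) = t * ∫ x, ψ x ∂(μφ : Measure X) := by
      have : (fun x => (t • ψ) x) = fun x => t * ψ x := by ext x; simp
      rw [this, integral_const_mul]
    rw [hsplitφ, abs_le] at hd
    have hkey : t * ((∫ x, ψ x ∂(μs n : Measure X)) - ∫ x, ψ x ∂(μφ : Measure X))
        ≤ (Γ φ - a) + ε / 2 * t := by nlinarith [hd.2, hk3]
    rw [div_add' _ _ _ ht.ne', le_div_iff₀ ht]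
    nlinarith [hkey]
  have habs : ∀ ψ : C(X, ℝ), ‖ψ‖ ≤ 1 →
      |(∫ x, ψ x ∂(μs n : Measure X)) - ∫ x, ψ x ∂(μφ : Measure X)|
        ≤ (Γ φ - a) / t + ε / 2 := by
    intro ψ hψ
    have hp := hineq ψ hψ
    have hm := hineq (-ψ) (by rw [norm_neg]; exact hψ)
    have e1 : (∫ x, (-ψ) x ∂(μs n : Measure X)) = -∫ x, ψ x ∂(μs n : Measure X) := by
      have : (fun x => (-ψ) x) = fun x => -(ψ x) := by ext x; simp
      rw [this, integral_neg]
    have e2 : (∫ x, (-ψ) x ∂(μφ : Measure X)) = -∫ x, ψ x ∂(μφ : Measure X) := by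
      have : (fun x => (-ψ) x) = fun x => -(ψ x) := by ext x; simp
      rw [this, integral_neg]
    rw [e1, e2] at hm
    exact abs_le.2 ⟨by linarith, hp⟩
  have hbd0 : (0 : ℝ) ≤ (Γ φ - a) / t + ε / 2 := by
    have : (0 : ℝ) ≤ (Γ φ - a) / t := div_nonneg (by linarith) ht.le
    linarith
  have htv : tvDist (μs n) μφ ≤ (Γ φ - a) / t + ε / 2 := by
    apply Real.sSup_le _ hbd0
    rintro x ⟨ψ, hψ, rfl⟩
    exact habs ψ hψ
  have htv0 : 0 ≤ tvDist (μs n) μφ := by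
    apply le_csSup
    · exact ⟨(Γ φ - a) / t + ε / 2, by rintro x ⟨ψ, hψ, rfl⟩; exact habs ψ hψ⟩
    · exact ⟨0, by simp, by simp⟩
  have hfrac : (Γ φ - a) / t < ε / 2 := by
    rw [div_lt_iff₀ ht]; exact hn1
  rw [Real.dist_eq, sub_zero, abs_of_nonneg htv0]
  linarith
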